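/- Let $r \geq 1$ and let $x_1, \ldots, x_r \in \mathbb{C}$. Set $x_0 = x_{r+1} = 1$ and $x_i = 0$ for $i < 0$ or $i > r+1$. For each positive integer $m$ and each $i \in \{1, \ldots, r\}$ let $M^{mi}$ be the $m \times m$ Toeplitz matrix with entries $(M^{mi})_{kl} = x_{l-k+i}$, and define $z_{i,m} = \det M^{mi}$, with the conventions $z_{0,m} = z_{r+1,m} = 1$ for all $m \geq 0$ and $z_{i,0} = 1$ for all $i$. Then for all $i \in \{1,\ldots,r\}$ and all $m \geq 1$ one has the discrete Hirota equation $z_{i,m+1}\, z_{i,m-1} = z_{i,m}^2 - z_{i-1,m}\, z_{i+1,m}$. -/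

import Mathlib

open Matrix Finset

private lemma dj_mul {R : Type*} [CommRing R] {n : ℕ} (M : Matrix (Fin (n+2)) (Fin (n+2)) R) :
    det M * (det M * det (M.submatrix (Fin.succ ∘ Fin.castSucc) (Fin.succ ∘ Fin.castSucc))) =
    det M * (det (M.submatrix Fin.succ Fin.succ) * det (M.submatrix Fin.castSucc Fin.castSucc)
      - det (M.submatrix Fin.castSucc Fin.succ) * det (M.submatrix Fin.succ Fin.castSucc)) := by
  classical
  set B : Matrix (Fin (n+2)) (Fin (n+2)) R := Matrix.of fun k l =>
    if l = 0 then adjugate M k 0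
    else if l = Fin.last (n+1) then adjugate M k (Fin.last (n+1))
    else if k = l then 1 else 0 with hBdef
  set C : Matrix (Fin (n+2)) (Fin (n+2)) R := Matrix.of fun k l =>
    if l = 0 then (if k = 0 then det M else 0)
    else if l = Fin.last (n+1) then (if k = Fin.last (n+1) then det M else 0)
    else M k l with hCdef
  have hMB : M * B = C := by
    ext k l
    rw [Matrix.mul_apply]
    by_cases h0 : l = 0
    · subst h0
      have h := congrFun (congrFun (mul_adjugate M) k) 0
      rw [Matrix.mul_apply] at h
      simpa [B, C, Matrix.one_apply, mul_ite] using h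
    · by_cases hL : l = Fin.last (n+1)
      · subst hL
        have h := congrFun (congrFun (mul_adjugate M) k) (Fin.last (n+1))
        rw [Matrix.mul_apply] at h
        have hne : (Fin.last (n+1) : Fin (n+2)) ≠ 0 := by
          simp [Fin.ext_iff]
        simpa [B, C, hne, Matrix.one_apply, mul_ite] using h
      · simp [B, C, h0, hL, mul_ite]
  -- determinant of C
  have hsuccL : (Fin.last n).succ = Fin.last (n+1) := by
    simp [Fin.ext_iff]
  have hinner : (C.submatrix Fin.succ Fin.succ).submatrix
      (Fin.last n).succAbove (Fin.last n).succAbove =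
      M.submatrix (Fin.succ ∘ Fin.castSucc) (Fin.succ ∘ Fin.castSucc) := by
    ext k l
    simp only [Matrix.submatrix_apply, Fin.succAbove_last_apply, Function.comp_apply]
    have hne0 : (Fin.castSucc l).succ ≠ (0 : Fin (n+2)) := Fin.succ_ne_zero _
    have hneL : (Fin.castSucc l).succ ≠ Fin.last (n+1) := by
      rw [Fin.ne_iff_vne]
      simp only [Fin.val_succ, Fin.coe_castSucc, Fin.val_last]
      omega
    simp [C, hne0, hneL]
  have hC : det C = det M * (det M *
      det (M.submatrix (Fin.succ ∘ Fin.castSucc) (Fin.succ ∘ Fin.castSucc))) := by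
    have hz : ∀ i : Fin (n+2), i ≠ 0 →
        (-1 : R) ^ (i : ℕ) * C i 0 * det (C.submatrix i.succAbove Fin.succ) = 0 := by
      intro i hi
      have : C i 0 = 0 := by simp [C, hi]
      rw [this]; ring
    rw [det_succ_column_zero, Fintype.sum_eq_single (0 : Fin (n+2)) hz]
    have hC00 : C 0 0 = det M := by simp [C]
    rw [hC00]
    simp only [Fin.val_zero, pow_zero, one_mul, Fin.succAbove_zero]
    congr 1
    -- expand along last column of the (n+1)-sized matrix
    have hz2 : ∀ i : Fin (n+1), i ≠ Fin.last n →
        (-1 : R) ^ ((i : ℕ) + (Fin.last n : ℕ)) *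
          (C.submatrix Fin.succ Fin.succ) i (Fin.last n) *
          det ((C.submatrix Fin.succ Fin.succ).submatrix i.succAbove (Fin.last n).succAbove)
          = 0 := by
      intro i hi
      have h1 : (C.submatrix Fin.succ Fin.succ) i (Fin.last n) = 0 := by
        have hne0 : (Fin.last n).succ ≠ (0 : Fin (n+2)) := Fin.succ_ne_zero _
        have hne : i.succ ≠ Fin.last (n+1) := by
          rw [← hsuccL]
          exact fun h => hi (Fin.succ_injective _ h)
        simp [C, hsuccL, hne0, hne]
      rw [h1]; ring
    rw [det_succ_column (C.submatrix Fin.succ Fin.succ) (Fin.last n),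
      Fintype.sum_eq_single (Fin.last n) hz2]
    have hent : (C.submatrix Fin.succ Fin.succ) (Fin.last n) (Fin.last n) = det M := by
      have hne0 : (Fin.last (n+1) : Fin (n+2)) ≠ 0 := by simp [Fin.ext_iff]
      simp [C, hsuccL, hne0]
    rw [hent, hinner]
    have hsign : ((-1 : R)) ^ ((Fin.last n : ℕ) + (Fin.last n : ℕ)) = 1 :=
      Even.neg_one_pow (⟨_, rfl⟩)
    rw [hsign, one_mul]
  -- determinant of B via block decomposition
  have hlast0 : (Fin.last (n+1) : Fin (n+2)) ≠ 0 := by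
    rw [Fin.ne_iff_vne]; simp
  set e : Fin n ⊕ Fin 2 ≃ Fin (n+2) :=
    finSumFinEquiv.trans (Fin.cycleRange ⟨n, by omega⟩) with he
  have he_inl : ∀ j : Fin n, e (Sum.inl j) = (Fin.castSucc j).succ := by
    intro j
    show Fin.cycleRange _ (finSumFinEquiv (Sum.inl j)) = _
    rw [finSumFinEquiv_apply_left]
    have hlt : (Fin.castAdd 2 j : Fin (n+2)) < (⟨n, by omega⟩ : Fin (n+2)) := by
      simp [Fin.lt_def]
    apply Fin.ext
    rw [Fin.coe_cycleRange_of_lt hlt]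
    simp
  have he_inr0 : e (Sum.inr 0) = 0 := by
    show Fin.cycleRange _ (finSumFinEquiv (Sum.inr 0)) = 0
    have h : finSumFinEquiv (Sum.inr (0 : Fin 2)) = (⟨n, by omega⟩ : Fin (n+2)) := by
      apply Fin.ext; simp [finSumFinEquiv_apply_right]
    rw [h, Fin.cycleRange_self]
  have he_inr1 : e (Sum.inr 1) = Fin.last (n+1) := by
    show Fin.cycleRange _ (finSumFinEquiv (Sum.inr 1)) = _
    have hgt : (⟨n, by omega⟩ : Fin (n+2)) < finSumFinEquiv (Sum.inr (1 : Fin 2)) := by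
      simp [Fin.lt_def, finSumFinEquiv_apply_right]
    rw [Fin.cycleRange_of_gt hgt]
    apply Fin.ext; simp [finSumFinEquiv_apply_right]
  have hblocks : B.submatrix e e = Matrix.fromBlocks (1 : Matrix (Fin n) (Fin n) R)
      (B.submatrix (fun i => e (Sum.inl i)) (fun j => e (Sum.inr j))) 0
      (B.submatrix (fun i => e (Sum.inr i)) (fun j => e (Sum.inr j))) := by
    ext i j
    cases i with
    | inl i =>
      cases j with
      | inl j =>
        simp only [Matrix.submatrix_apply, Matrix.fromBlocks_apply₁₁]
        rw [he_inl, he_inl]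
        have h0 : (Fin.castSucc j).succ ≠ (0 : Fin (n+2)) := Fin.succ_ne_zero _
        have hL : (Fin.castSucc j).succ ≠ Fin.last (n+1) := by
          rw [Fin.ne_iff_vne]
          simp only [Fin.val_succ, Fin.coe_castSucc, Fin.val_last]
          omega
        simp [B, h0, hL, Matrix.one_apply, Fin.succ_inj, Fin.castSucc_inj]
      | inr j => rfl
    | inr i =>
      cases j with
      | inl j =>
        simp only [Matrix.submatrix_apply, Matrix.fromBlocks_apply₂₁, Matrix.zero_apply]
        rw [he_inl]
        have h0 : (Fin.castSucc j).succ ≠ (0 : Fin (n+2)) := Fin.succ_ne_zero _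
        have hL : (Fin.castSucc j).succ ≠ Fin.last (n+1) := by
          rw [Fin.ne_iff_vne]
          simp only [Fin.val_succ, Fin.coe_castSucc, Fin.val_last]
          omega
        have hne : e (Sum.inr i) ≠ (Fin.castSucc j).succ := by
          rw [← he_inl j]
          intro h
          simpa using e.injective h
        simp [B, h0, hL, hne]
      | inr j => rfl
  have hdetB : det B =
      adjugate M 0 0 * adjugate M (Fin.last (n+1)) (Fin.last (n+1))
      - adjugate M 0 (Fin.last (n+1)) * adjugate M (Fin.last (n+1)) 0 := by
    rw [← det_submatrix_equiv_self e, hblocks, det_fromBlocks_zero₂₁, det_one, one_mul,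
      det_fin_two]
    simp only [Matrix.submatrix_apply, he_inr0, he_inr1]
    simp [B, hlast0]
  -- adjugate corner entries as minors
  have ha00 : adjugate M 0 0 = det (M.submatrix Fin.succ Fin.succ) := by
    rw [adjugate_fin_succ_eq_det_submatrix]
    simp
  have haLL : adjugate M (Fin.last (n+1)) (Fin.last (n+1)) =
      det (M.submatrix Fin.castSucc Fin.castSucc) := by
    rw [adjugate_fin_succ_eq_det_submatrix]
    simp [Fin.succAbove_last, Even.neg_one_pow (⟨n+1, rfl⟩)]
  have ha0L : adjugate M 0 (Fin.last (n+1)) =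
      (-1 : R) ^ (n+1) * det (M.submatrix Fin.castSucc Fin.succ) := by
    rw [adjugate_fin_succ_eq_det_submatrix]
    simp [Fin.succAbove_last]
  have haL0 : adjugate M (Fin.last (n+1)) 0 =
      (-1 : R) ^ (n+1) * det (M.submatrix Fin.succ Fin.castSucc) := by
    rw [adjugate_fin_succ_eq_det_submatrix]
    simp [Fin.succAbove_last]
  calc det M * (det M * det (M.submatrix (Fin.succ ∘ Fin.castSucc) (Fin.succ ∘ Fin.castSucc)))
      = det C := hC.symm
    _ = det (M * B) := by rw [hMB]
    _ = det M * det B := det_mul M B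
    _ = _ := by
        rw [hdetB, ha00, haLL, ha0L, haL0]
        have hs : ((-1 : R) ^ (n+1) * det (M.submatrix Fin.castSucc Fin.succ)) *
            ((-1 : R) ^ (n+1) * det (M.submatrix Fin.succ Fin.castSucc)) =
            det (M.submatrix Fin.castSucc Fin.succ) * det (M.submatrix Fin.succ Fin.castSucc) := by
          rw [mul_mul_mul_comm, ← pow_add, Even.neg_one_pow (⟨n+1, rfl⟩), one_mul]
        rw [hs]

private lemma dj {R : Type*} [CommRing R] {n : ℕ} (M : Matrix (Fin (n+2)) (Fin (n+2)) R) :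
    det M * det (M.submatrix (Fin.succ ∘ Fin.castSucc) (Fin.succ ∘ Fin.castSucc)) =
      det (M.submatrix Fin.succ Fin.succ) * det (M.submatrix Fin.castSucc Fin.castSucc)
        - det (M.submatrix Fin.castSucc Fin.succ) * det (M.submatrix Fin.succ Fin.castSucc) := by
  classical
  set φ : MvPolynomial (Fin (n+2) × Fin (n+2)) ℤ →+* R :=
    MvPolynomial.eval₂Hom (Int.castRingHom R) (fun p => M p.1 p.2) with hφ
  set M₀ := mvPolynomialX (Fin (n+2)) (Fin (n+2)) ℤ with hM₀
  have hcancel := mul_left_cancel₀ (det_mvPolynomialX_ne_zero (Fin (n+2)) ℤ) (dj_mul M₀)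
  have hmap : ∀ {k : ℕ} (a b : Fin k → Fin (n+2)),
      φ (det (M₀.submatrix a b)) = det (M.submatrix a b) := by
    intro k a b
    rw [RingHom.map_det]
    congr 1
    ext i j
    simp [φ, M₀]
  have hM : φ (det M₀) = det M := by
    rw [RingHom.map_det]
    congr 1
    ext i j
    simp [φ, M₀]
  have h := congrArg φ hcancel
  rw [_root_.map_mul, _root_.map_sub, _root_.map_mul, _root_.map_mul, hM, hmap, hmap, hmap, hmap, hmap] at h
  exact h


/-- The Toeplitz determinants `z i m = det (x_{l-k+i})_{k,l=1..m}` built from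
`x₀ = x_{r+1} = 1`, arbitrary `x₁, …, x_r` and `x_i = 0` otherwise, satisfy the
discrete Hirota equations of type `(A_r, A_ℕ)`. -/
theorem toeplitz_solves_hirota_A (r : ℕ) (hr : 1 ≤ r) (x : ℤ → ℂ)
    (hx0 : x 0 = 1) (hxr : x (r + 1) = 1)
    (hxout : ∀ j : ℤ, j < 0 ∨ j > r + 1 → x j = 0) :
    let z : ℕ → ℕ → ℂ := fun i m =>
      Matrix.det (Matrix.of fun k l : Fin m => x ((l : ℤ) - (k : ℤ) + (i : ℤ)))
    ∀ i : ℕ, 1 ≤ i → i ≤ r → ∀ m : ℕ, 1 ≤ m →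
      z i (m + 1) * z i (m - 1) = z i m ^ 2 - z (i - 1) m * z (i + 1) m := by
  intro z i hi1 hir m hm
  obtain ⟨p, rfl⟩ : ∃ p, m = p + 1 := ⟨m - 1, by omega⟩
  have hz : ∀ a b : ℕ,
      z a b = Matrix.det (Matrix.of fun k l : Fin b => x ((l : ℤ) - (k : ℤ) + (a : ℤ))) :=
    fun _ _ => rfl
  simp only [hz, Nat.add_sub_cancel]
  set M : Matrix (Fin (p + 1 + 1)) (Fin (p + 1 + 1)) ℂ :=
    Matrix.of fun k l => x ((l : ℤ) - (k : ℤ) + (i : ℤ)) with hM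
  have key := dj M
  have e1 : M.submatrix Fin.castSucc Fin.castSucc =
      Matrix.of fun k l : Fin (p + 1) => x ((l : ℤ) - (k : ℤ) + (i : ℤ)) := by
    ext k l
    simp [M]
  have e2 : M.submatrix Fin.succ Fin.succ =
      Matrix.of fun k l : Fin (p + 1) => x ((l : ℤ) - (k : ℤ) + (i : ℤ)) := by
    ext k l
    simp only [Matrix.submatrix_apply, Matrix.of_apply, M]
    congr 1
    simp only [Fin.val_succ]
    push_cast
    ring
  have e3 : M.submatrix Fin.succ Fin.castSucc =
      Matrix.of fun k l : Fin (p + 1) => x ((l : ℤ) - (k : ℤ) + ((i - 1 : ℕ) : ℤ)) := by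
    ext k l
    simp only [Matrix.submatrix_apply, Matrix.of_apply, M]
    congr 1
    have : ((i - 1 : ℕ) : ℤ) = (i : ℤ) - 1 := by omega
    rw [this]
    simp only [Fin.val_succ, Fin.coe_castSucc]
    push_cast
    ring
  have e4 : M.submatrix Fin.castSucc Fin.succ =
      Matrix.of fun k l : Fin (p + 1) => x ((l : ℤ) - (k : ℤ) + ((i + 1 : ℕ) : ℤ)) := by
    ext k l
    simp only [Matrix.submatrix_apply, Matrix.of_apply, M]
    congr 1
    simp only [Fin.val_succ, Fin.coe_castSucc]
    push_cast
    ring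
  have e5 : M.submatrix (Fin.succ ∘ Fin.castSucc) (Fin.succ ∘ Fin.castSucc) =
      Matrix.of fun k l : Fin p => x ((l : ℤ) - (k : ℤ) + (i : ℤ)) := by
    ext k l
    simp only [Matrix.submatrix_apply, Matrix.of_apply, Function.comp_apply, M]
    congr 1
    simp only [Fin.val_succ, Fin.coe_castSucc]
    push_cast
    ring
  rw [e1, e2, e3, e4, e5] at key
  rw [sq]
  linear_combination key
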